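/- Let a, b, α > 0 be real and let z be a complex number with |z| > 1 and |arg z| < (a·α·π)/2. Then for every δ > 0 there is a constant M (depending on a, b, α, δ but not on x, y, z) such that for all x ≥ 0 and y ≥ 0, |z^{x+iy} / Γ(a(x+iy)+b)^α| ≤ M · e^{(aα+δ)x} · |z|^x · (ax+b)^{−α(ax+b)} · e^{(|arg z| + aαπ/2 + δ)·y}, where z^{w} = exp(w·Log z) with the principal logarithm, and Γ(·)^α = exp(α·Log Γ(·)) using a continuous branch. -/

import Mathlib

open scoped Real
open Filter Finset Topology


lemma aux_sinh_le (x : ℝ) (hx : 0 ≤ x) : Real.sinh x ≤ x * Real.exp x := by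
  rw [Real.sinh_eq]
  have h1 : (-2*x) + 1 ≤ Real.exp (-2*x) := Real.add_one_le_exp _
  have h4 : 0 < Real.exp x := Real.exp_pos x
  have h5 : Real.exp (-2*x) * Real.exp x = Real.exp (-x) := by
    rw [← Real.exp_add]; ring_nf
  have h6 := mul_le_mul_of_nonneg_right h1 h4.le
  rw [h5] at h6
  linarith

lemma aux_prod_le (v : ℝ) (hv : 0 ≤ v) (n : ℕ) :
    ∏ j ∈ Finset.range n, (1 + v^2/((j:ℝ)+1)^2) ≤ Real.exp (π * v) := by
  rcases eq_or_lt_of_le hv with h0 | h0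
  · simp [← h0, Real.exp_nonneg]
  have key : Tendsto (fun n : ℕ => π * v * ∏ j ∈ Finset.range n, (1 + v^2/((j:ℝ)+1)^2))
      atTop (𝓝 (Real.sinh (π * v))) := by
    have := Complex.tendsto_euler_sin_prod (v * Complex.I)
    have heq : ∀ n : ℕ, (π * (v * Complex.I) * ∏ j ∈ Finset.range n,
        ((1 : ℂ) - (v * Complex.I) ^ 2 / ((j : ℂ) + 1) ^ 2)) =
        ((π * v * ∏ j ∈ Finset.range n, (1 + v^2/((j:ℝ)+1)^2) : ℝ) : ℂ) * Complex.I := by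
      intro n
      have hterm : ∀ j : ℕ, ((1 : ℂ) - (v * Complex.I) ^ 2 / ((j : ℂ) + 1) ^ 2) =
          ((1 + v^2/((j:ℝ)+1)^2 : ℝ) : ℂ) := by
        intro j
        push_cast
        rw [mul_pow, Complex.I_sq]
        ring
      simp_rw [hterm, ← Complex.ofReal_prod]
      push_cast
      ring
    rw [show Complex.sin (π * (v * Complex.I)) = ((Real.sinh (π*v) : ℝ) : ℂ) * Complex.I by
      rw [show (π : ℂ) * (v * Complex.I) = ((π * v : ℝ) : ℂ) * Complex.I by push_cast; ring,
        Complex.sin_mul_I, Complex.ofReal_sinh]] at this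
    simp_rw [heq] at this
    have h2 := (Complex.continuous_im.tendsto _).comp this
    simp only [Function.comp_def, Complex.mul_I_im, Complex.ofReal_re] at h2
    exact h2
  have hmono : Monotone (fun n : ℕ => π * v * ∏ j ∈ Finset.range n, (1 + v^2/((j:ℝ)+1)^2)) := by
    intro m n hmn
    have hterm : ∀ j : ℕ, (1:ℝ) ≤ 1 + v^2/((j:ℝ)+1)^2 :=
      fun j => le_add_of_nonneg_right (by positivity)
    have hP : ∏ j ∈ Finset.range m, (1 + v^2/((j:ℝ)+1)^2) ≤
        ∏ j ∈ Finset.range n, (1 + v^2/((j:ℝ)+1)^2) := by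
      rw [← Finset.prod_range_mul_prod_Ico (fun j : ℕ => 1 + v^2/((j:ℝ)+1)^2) hmn]
      have h1 : (1:ℝ) ≤ ∏ j ∈ Finset.Ico m n, (1 + v^2/((j:ℝ)+1)^2) := by
        calc (1:ℝ) = ∏ _j ∈ Finset.Ico m n, (1:ℝ) := by simp
          _ ≤ _ := Finset.prod_le_prod (fun _ _ => zero_le_one) (fun j _ => hterm j)
      have h2 : (0:ℝ) ≤ ∏ j ∈ Finset.range m, (1 + v^2/((j:ℝ)+1)^2) :=
        Finset.prod_nonneg (fun j _ => by positivity)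
      nlinarith
    have hπv : 0 < π * v := by positivity
    simp only
    nlinarith
  have hle := hmono.ge_of_tendsto key n
  have hsinh := aux_sinh_le (π * v) (by positivity)
  have hπv : 0 < π * v := by positivity
  rw [← mul_le_mul_iff_right₀ hπv]
  exact hle.trans (by linarith)



lemma aux_gamma_lower (u v : ℝ) (hu : 1 ≤ u) (hv : 0 ≤ v) :
    Real.Gamma u ≤ Real.exp (π * v / 2) * ‖Complex.Gamma (u + v * Complex.I)‖ := by
  set s : ℂ := u + v * Complex.I with hs
  have hsre : s.re = u := by simp [hs]
  have hu0 : (0:ℝ) < u := lt_of_lt_of_le one_pos hu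
  have hpt : ∀ n : ℕ, 1 ≤ n →
      Real.GammaSeq u n ≤ Real.exp (π * v / 2) * ‖Complex.GammaSeq s n‖ := by
    intro n hn
    have hprod_pos : ∀ j : ℕ, (0:ℝ) < u + j := fun j => by positivity
    have hnorm : ‖Complex.GammaSeq s n‖ =
        (n:ℝ) ^ u * (n.factorial : ℝ) / ∏ j ∈ Finset.range (n+1), ‖s + (j:ℂ)‖ := by
      rw [Complex.GammaSeq, norm_div, norm_mul, Complex.norm_natCast_cpow_of_pos hn, hsre]
      rw [norm_prod]
      norm_num
    have hfac : ∀ j : ℕ, ‖s + (j:ℂ)‖ = Real.sqrt ((u+j)^2 + v^2) := by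
      intro j
      have heq : s + (j:ℂ) = ((u + j : ℝ) : ℂ) + (v:ℝ) * Complex.I := by
        rw [hs]; push_cast; ring
      rw [heq, Complex.norm_add_mul_I]
    have hfac_pos : ∀ j : ℕ, (0:ℝ) < ‖s + (j:ℂ)‖ := by
      intro j
      rw [hfac j]
      exact Real.sqrt_pos.mpr (by positivity)
    have hprodbound : ∏ j ∈ Finset.range (n+1), ‖s + (j:ℂ)‖ ≤
        Real.exp (π * v / 2) * ∏ j ∈ Finset.range (n+1), (u + j) := by
      have h1 : ∀ j ∈ Finset.range (n+1), ‖s + (j:ℂ)‖ ≤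
          (u + j) * Real.sqrt (1 + v^2/((j:ℝ)+1)^2) := by
        intro j _
        rw [hfac j]
        rw [show (u+(j:ℝ)) * Real.sqrt (1 + v^2/((j:ℝ)+1)^2)
            = Real.sqrt ((u+j)^2 * (1 + v^2/((j:ℝ)+1)^2)) by
          rw [Real.sqrt_mul (by positivity), Real.sqrt_sq (hprod_pos j).le]]
        apply Real.sqrt_le_sqrt
        have hj1 : ((j:ℝ)+1) ≤ u + j := by linarith
        have hj1' : (0:ℝ) < (j:ℝ)+1 := by positivity
        have hsq : ((j:ℝ)+1)^2 ≤ (u+(j:ℝ))^2 := pow_le_pow_left₀ hj1'.le hj1 2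
        have : v^2 ≤ (u+j)^2 * (v^2/((j:ℝ)+1)^2) := by
          rw [mul_div_assoc', le_div_iff₀ (by positivity)]
          nlinarith [sq_nonneg v]
        nlinarith
      have hsqrtprod : ∏ j ∈ Finset.range (n+1), Real.sqrt (1 + v^2/((j:ℝ)+1)^2) ≤
          Real.exp (π * v / 2) := by
        apply le_of_pow_le_pow_left₀ (two_ne_zero) (Real.exp_nonneg _)
        rw [← Finset.prod_pow]
        calc ∏ j ∈ Finset.range (n+1), (Real.sqrt (1 + v^2/((j:ℝ)+1)^2))^2
            = ∏ j ∈ Finset.range (n+1), (1 + v^2/((j:ℝ)+1)^2) := by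
              apply Finset.prod_congr rfl
              intro j _
              exact Real.sq_sqrt (by positivity)
          _ ≤ Real.exp (π * v) := aux_prod_le v hv (n+1)
          _ = (Real.exp (π * v / 2))^2 := by
              rw [← Real.exp_nat_mul]; ring_nf
      calc ∏ j ∈ Finset.range (n+1), ‖s + (j:ℂ)‖
          ≤ ∏ j ∈ Finset.range (n+1), ((u + j) * Real.sqrt (1 + v^2/((j:ℝ)+1)^2)) :=
            Finset.prod_le_prod (fun j _ => (hfac_pos j).le.trans (le_of_eq rfl)) h1
        _ = (∏ j ∈ Finset.range (n+1), (u + (j:ℝ))) *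
            ∏ j ∈ Finset.range (n+1), Real.sqrt (1 + v^2/((j:ℝ)+1)^2) := by
            rw [Finset.prod_mul_distrib]
        _ ≤ (∏ j ∈ Finset.range (n+1), (u + (j:ℝ))) * Real.exp (π * v / 2) := by
            exact mul_le_mul_of_nonneg_left hsqrtprod
              (Finset.prod_nonneg fun j _ => (hprod_pos j).le)
        _ = Real.exp (π * v / 2) * ∏ j ∈ Finset.range (n+1), (u + j) := by ring
    -- combine
    have hA : (0:ℝ) < (n:ℝ) ^ u * (n.factorial : ℝ) := by
      have : (0:ℝ) < (n:ℝ) ^ u := Real.rpow_pos_of_pos (by exact_mod_cast hn) u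
      positivity
    have hPn : (0:ℝ) < ∏ j ∈ Finset.range (n+1), (u + (j:ℝ)) :=
      Finset.prod_pos fun j _ => hprod_pos j
    have hQn : (0:ℝ) < ∏ j ∈ Finset.range (n+1), ‖s + (j:ℂ)‖ :=
      Finset.prod_pos fun j _ => hfac_pos j
    rw [Real.GammaSeq, hnorm, mul_div_assoc']
    rw [div_le_div_iff₀ hPn hQn]
    nlinarith [mul_le_mul_of_nonneg_left hprodbound hA.le]
  have h2 := Real.GammaSeq_tendsto_Gamma u
  have h3 := (Complex.GammaSeq_tendsto_Gamma s).norm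
  have h4 := h3.const_mul (Real.exp (π * v / 2))
  exact le_of_tendsto_of_tendsto h2 h4 (Filter.eventually_atTop.mpr ⟨1, hpt⟩)



-- L3
lemma aux_gamma_lower3 (u v : ℝ) (hu : 0 < u) (hv : 0 ≤ v) :
    Real.Gamma (u + 3) ≤
      Real.exp (π * v / 2) * (u + v + 3)^3 * ‖Complex.Gamma (u + v * Complex.I)‖ := by
  set s : ℂ := u + v * Complex.I with hs
  have hre : ∀ j : ℕ, (s + j).re = u + j := by intro j; simp [hs]
  have hne : ∀ j : ℕ, s + (j:ℂ) ≠ 0 := by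
    intro j h
    have := congrArg Complex.re h
    rw [hre j] at this
    simp at this
    have : (0:ℝ) < u + j := by positivity
    linarith
  have h3 : Complex.Gamma (s + 3) = (s+2) * ((s+1) * (s * Complex.Gamma s)) := by
    have e0 := Complex.Gamma_add_one s (by simpa using hne 0)
    have e1 := Complex.Gamma_add_one (s+1) (by simpa using hne 1)
    have h2ne : s + 1 + 1 ≠ 0 := by
      have := hne 2; push_cast at this; rwa [show s + 1 + 1 = s + 2 by ring]
    have e2 := Complex.Gamma_add_one (s+1+1) h2ne
    rw [show s + 3 = s + 1 + 1 + 1 by ring, e2, e1, e0]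
    ring
  have key : Real.Gamma (u+3) ≤ Real.exp (π * v / 2) * ‖Complex.Gamma (s + 3)‖ := by
    have := aux_gamma_lower (u+3) v (by linarith) hv
    have harg : ((u + 3 : ℝ) : ℂ) + v * Complex.I = s + 3 := by rw [hs]; push_cast; ring
    rwa [harg] at this
  have hjb : ∀ j : ℕ, (j:ℝ) ≤ 2 → ‖s + (j:ℂ)‖ ≤ u + v + 3 := by
    intro j hj
    calc ‖s + (j:ℂ)‖ ≤ |(s + (j:ℂ)).re| + |(s + (j:ℂ)).im| :=
          Complex.norm_le_abs_re_add_abs_im _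
      _ = (u + j) + v := by
          rw [hre j, show (s + (j:ℂ)).im = v by simp [hs]]
          rw [abs_of_pos (by positivity), abs_of_nonneg hv]
      _ ≤ u + v + 3 := by linarith
  have hnorm3 : ‖Complex.Gamma (s + 3)‖ ≤ (u+v+3)^3 * ‖Complex.Gamma s‖ := by
    rw [h3, norm_mul, norm_mul, norm_mul]
    have h0 : ‖s‖ ≤ u + v + 3 := by simpa using hjb 0 (by norm_num)
    have h1 : ‖s + 1‖ ≤ u + v + 3 := by
      have := hjb 1 (by norm_num); simpa using this
    have h2 : ‖s + 2‖ ≤ u + v + 3 := by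
      have := hjb 2 (by norm_num); push_cast at this; simpa using this
    have hG : (0:ℝ) ≤ ‖Complex.Gamma s‖ := norm_nonneg _
    have huv : (0:ℝ) < u + v + 3 := by positivity
    calc ‖s+2‖ * (‖s+1‖ * (‖s‖ * ‖Complex.Gamma s‖))
        ≤ (u+v+3) * ((u+v+3) * ((u+v+3) * ‖Complex.Gamma s‖)) := by
          apply mul_le_mul h2 _ (by positivity) huv.le
          apply mul_le_mul h1 _ (by positivity) huv.le
          exact mul_le_mul_of_nonneg_right h0 hG
      _ = (u+v+3)^3 * ‖Complex.Gamma s‖ := by ring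
  calc Real.Gamma (u+3) ≤ Real.exp (π * v / 2) * ‖Complex.Gamma (s + 3)‖ := key
    _ ≤ Real.exp (π * v / 2) * ((u+v+3)^3 * ‖Complex.Gamma s‖) :=
        mul_le_mul_of_nonneg_left hnorm3 (Real.exp_nonneg _)
    _ = Real.exp (π * v / 2) * (u+v+3)^3 * ‖Complex.Gamma s‖ := by ring

-- monotonicity of t log t - t
lemma aux_mono (s t : ℝ) (hs : 1 ≤ s) (hst : s ≤ t) :
    s * Real.log s - s ≤ t * Real.log t - t := by
  have : MonotoneOn (fun r : ℝ => r * Real.log r - r) (Set.Ici 1) := by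
    have hderiv : ∀ x : ℝ, 1 < x →
        HasDerivAt (fun r : ℝ => r * Real.log r - r) (Real.log x) x := by
      intro x hx1
      have h1 : HasDerivAt (fun r : ℝ => r * Real.log r) (Real.log x + 1) x := by
        have := (hasDerivAt_id x).mul (Real.hasDerivAt_log (by linarith))
        refine this.congr_deriv ?_
        field_simp
        simp only [id]; ring
      have := h1.sub (hasDerivAt_id x)
      refine this.congr_deriv ?_
      ring
    refine monotoneOn_of_deriv_nonneg (convex_Ici 1) ?_ ?_ ?_
    · apply ContinuousOn.sub (ContinuousOn.mul continuousOn_id ?_) continuousOn_id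
      exact Real.continuousOn_log.mono (fun x hx => by
        simp only [Set.mem_compl_iff, Set.mem_singleton_iff]
        intro h; rw [h] at hx; simp at hx; linarith)
    · intro x hx
      rw [interior_Ici] at hx
      exact (hderiv x hx).differentiableAt.differentiableWithinAt
    · intro x hx
      rw [interior_Ici] at hx
      rw [(hderiv x hx).deriv]
      exact Real.log_nonneg hx.le
  exact this (by simpa using hs) (by simp; linarith) hst

-- L4
lemma aux_stirling_lower (u : ℝ) (hu : 0 < u) :
    Real.exp (u * Real.log u - u - 1) ≤ Real.Gamma (u + 3) := by
  set n : ℕ := ⌊u⌋₊ + 2 with hn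
  have hn2 : (2:ℝ) ≤ (n:ℝ) + 1 := by
    have h : (2:ℕ) ≤ n := by omega
    have : (2:ℝ) ≤ (n:ℝ) := by exact_mod_cast h
    linarith
  have hfloor : ((⌊u⌋₊:ℕ) : ℝ) ≤ u := Nat.floor_le hu.le
  have hun : u + 1 ≤ (n:ℝ) := by
    have := Nat.lt_floor_add_one u
    have hcast : (n:ℝ) = (⌊u⌋₊ : ℝ) + 2 := by rw [hn]; push_cast; ring
    linarith
  have hnu3 : (n:ℝ) + 1 ≤ u + 3 := by
    have hcast : (n:ℝ) = (⌊u⌋₊ : ℝ) + 2 := by rw [hn]; push_cast; ring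
    linarith
  have hnpos : (0:ℝ) < (n:ℝ) := by positivity
  -- Step 1: Gamma monotone
  have step1 : Real.Gamma ((n:ℝ)+1) ≤ Real.Gamma (u+3) := by
    have := Real.Gamma_strictMonoOn_Ici.monotoneOn
      (a := (n:ℝ)+1) (b := u+3) (by exact hn2) (by simp; linarith) hnu3
    exact this
  -- Step 2: Gamma (n+1) = n!
  have step2 : Real.Gamma ((n:ℝ)+1) = (n.factorial : ℝ) := Real.Gamma_nat_eq_factorial n
  -- Step 3: n^n e^{-n} ≤ n!
  have step3 : Real.exp ((n:ℝ) * Real.log (n:ℝ) - (n:ℝ)) ≤ (n.factorial : ℝ) := by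
    have hsum := Real.sum_le_exp_of_nonneg (x := (n:ℝ)) hnpos.le (n+1)
    have hsingle : (n:ℝ)^(n:ℕ) / (n.factorial : ℝ) ≤
        ∑ i ∈ Finset.range (n+1), (n:ℝ)^i / (i.factorial : ℝ) := by
      apply Finset.single_le_sum (f := fun i : ℕ => (n:ℝ)^i / (i.factorial : ℝ))
      · intro i _; positivity
      · exact Finset.self_mem_range_succ n
    have hf : (0:ℝ) < (n.factorial : ℝ) := by exact_mod_cast n.factorial_pos
    have hkey : (n:ℝ)^(n:ℕ) ≤ Real.exp (n:ℝ) * (n.factorial : ℝ) := by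
      have h := (div_le_iff₀ hf).mp (hsingle.trans hsum)
      linarith
    have hexp : Real.exp ((n:ℝ) * Real.log (n:ℝ)) = (n:ℝ)^(n:ℕ) := by
      rw [show ((n:ℝ) * Real.log (n:ℝ)) = ((n:ℕ):ℝ) * Real.log (n:ℝ) from rfl,
        Real.exp_nat_mul, Real.exp_log hnpos]

    rw [Real.exp_sub, hexp, div_le_iff₀ (Real.exp_pos _)]
    linarith [hkey]
  -- Step 4
  have step4 : Real.exp ((u+1) * Real.log (u+1) - (u+1)) ≤
      Real.exp ((n:ℝ) * Real.log (n:ℝ) - (n:ℝ)) :=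
    Real.exp_le_exp.mpr (aux_mono (u+1) (n:ℝ) (by linarith) hun)
  -- Step 5
  have step5 : u * Real.log u - u - 1 ≤ (u+1) * Real.log (u+1) - (u+1) := by
    have l1 : Real.log u ≤ Real.log (u+1) := Real.log_le_log hu (by linarith)
    have l2 : (0:ℝ) ≤ Real.log (u+1) := Real.log_nonneg (by linarith)
    nlinarith [mul_le_mul_of_nonneg_left l1 hu.le]
  calc Real.exp (u * Real.log u - u - 1)
      ≤ Real.exp ((u+1) * Real.log (u+1) - (u+1)) := Real.exp_le_exp.mpr step5
    _ ≤ Real.exp ((n:ℝ) * Real.log (n:ℝ) - (n:ℝ)) := step4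
    _ ≤ (n.factorial : ℝ) := step3
    _ = Real.Gamma ((n:ℝ)+1) := step2.symm
    _ ≤ Real.Gamma (u+3) := step1


lemma aux_poly (T q c : ℝ) (hT : 0 < T) (hq : 0 < q) (hc : 0 < c) :
    T ^ q ≤ Real.exp (c * T) * Real.exp (q * Real.log (q/c) - q) := by
  rw [← Real.exp_add, Real.rpow_def_of_pos hT]
  apply Real.exp_le_exp.mpr
  have h1 : Real.log (c*T/q) ≤ c*T/q - 1 := Real.log_le_sub_one_of_pos (by positivity)
  have h2 : Real.log T = Real.log (c*T/q) + Real.log (q/c) := by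
    rw [← Real.log_mul (by positivity) (by positivity)]
    congr 1
    field_simp
  have h4 : Real.log (c*T/q) * q ≤ (c*T/q - 1) * q := mul_le_mul_of_nonneg_right h1 hq.le
  have h5 : (c*T/q - 1) * q = c*T - q := by field_simp
  nlinarith [h2, h4, h5]

theorem stmt_11 (a b α : ℝ) (ha : 0 < a) (hb : 0 < b) (hα : 0 < α)
    (z : ℂ) (hz1 : 1 < ‖z‖) (hz2 : |z.arg| < a * α * π / 2) :
    ∀ δ > (0 : ℝ), ∃ M > (0 : ℝ), ∀ x y : ℝ, 0 ≤ x → 0 ≤ y →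
      ‖z ^ ((x : ℂ) + y * Complex.I)‖ /
          ‖Complex.Gamma (a * ((x : ℂ) + y * Complex.I) + b)‖ ^ α ≤
        M * Real.exp ((a * α + δ) * x) * ‖z‖ ^ x *
          (a * x + b) ^ (-(α * (a * x + b))) *
          Real.exp ((|z.arg| + a * α * π / 2 + δ) * y) := by
  intro δ hδ
  have hz0 : z ≠ 0 := by
    intro h
    rw [h, norm_zero] at hz1
    linarith
  set θ := z.arg with hθ
  set c : ℝ := δ / a with hc_def
  have hc : 0 < c := by positivity
  set K : ℝ := Real.exp ((3*α) * Real.log ((3*α)/c) - (3*α)) with hK_def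
  set M : ℝ := K * Real.exp (α*b + α + c*(b+3)) with hM_def
  have hK : 0 < K := Real.exp_pos _
  have hM : 0 < M := mul_pos hK (Real.exp_pos _)
  refine ⟨M, hM, ?_⟩
  intro x y hx hy
  set u : ℝ := a*x + b with hu_def
  set v : ℝ := a*y with hv_def
  have hu : 0 < u := by positivity
  have hv : 0 ≤ v := by positivity
  set P : ℝ := u + v + 3 with hP_def
  have hP : 0 < P := by positivity
  -- rewrite Gamma argument
  have hsarg : (a:ℂ) * ((x:ℂ) + (y:ℂ)*Complex.I) + (b:ℂ)
      = ((u:ℝ):ℂ) + ((v:ℝ):ℂ)*Complex.I := by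
    rw [hu_def, hv_def]; push_cast; ring
  rw [hsarg]
  -- lower bound for Gamma
  set L : ℝ := Real.exp (u*Real.log u - u - 1) / (Real.exp (π*v/2) * P^3) with hL_def
  have hL : 0 < L := by positivity
  have hGam : L ≤ ‖Complex.Gamma ((u:ℝ) + (v:ℝ)*Complex.I)‖ := by
    rw [hL_def, div_le_iff₀ (by positivity)]
    calc Real.exp (u*Real.log u - u - 1) ≤ Real.Gamma (u+3) := aux_stirling_lower u hu
      _ ≤ Real.exp (π * v / 2) * (u + v + 3)^3 * ‖Complex.Gamma ((u:ℝ) + (v:ℝ)*Complex.I)‖ :=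
          aux_gamma_lower3 u v hu hv
      _ = ‖Complex.Gamma ((u:ℝ) + (v:ℝ)*Complex.I)‖ * (Real.exp (π*v/2) * P^3) := by
          rw [hP_def]; ring
  have hGpos : 0 < ‖Complex.Gamma ((u:ℝ) + (v:ℝ)*Complex.I)‖ := lt_of_lt_of_le hL hGam
  have hGα : L ^ α ≤ ‖Complex.Gamma ((u:ℝ) + (v:ℝ)*Complex.I)‖ ^ α :=
    Real.rpow_le_rpow hL.le hGam hα.le
  have hGαpos : 0 < ‖Complex.Gamma ((u:ℝ) + (v:ℝ)*Complex.I)‖ ^ α :=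
    Real.rpow_pos_of_pos hGpos α
  rw [div_le_iff₀ hGαpos]
  -- norm of z^w
  have hzw : ‖z ^ ((x:ℂ) + (y:ℂ)*Complex.I)‖ = ‖z‖ ^ x * Real.exp (-(θ*y)) := by
    rw [Complex.norm_cpow_of_ne_zero hz0]
    have hre : ((x:ℂ) + (y:ℂ)*Complex.I).re = x := by simp
    have him : ((x:ℂ) + (y:ℂ)*Complex.I).im = y := by simp
    rw [hre, him, div_eq_mul_inv, ← Real.exp_neg, ← hθ]
  -- L^α computation
  have hLα : L ^ α = Real.exp ((u*Real.log u - u - 1)*α) /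
      (Real.exp (π*v/2*α) * P ^ ((3:ℝ)*α)) := by
    rw [hL_def, Real.div_rpow (Real.exp_nonneg _) (by positivity),
      Real.mul_rpow (Real.exp_nonneg _) (by positivity), ← Real.exp_mul, ← Real.exp_mul,
      ← Real.rpow_natCast P 3, ← Real.rpow_mul hP.le]
    norm_num
  -- polynomial absorption
  have hpoly : P ^ ((3:ℝ)*α) ≤ Real.exp (c*P) * K := by
    have := aux_poly P (3*α) c hP (by positivity) hc
    rw [hK_def]
    exact this
  -- main chain
  have hu_rpow : u ^ (-(α*u)) = Real.exp (-(α*u) * Real.log u) := by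
    rw [Real.rpow_def_of_pos hu, mul_comm]
  calc ‖z ^ ((x:ℂ) + (y:ℂ)*Complex.I)‖ = ‖z‖ ^ x * Real.exp (-(θ*y)) := hzw
    _ ≤ ‖z‖ ^ x * (M * Real.exp ((a*α+δ)*x) * u ^ (-(α*u)) *
          Real.exp ((|θ| + a*α*π/2 + δ)*y) * L ^ α) := by
        apply mul_le_mul_of_nonneg_left _ (Real.rpow_nonneg (norm_nonneg z) x)
        rw [hLα, hu_rpow, hM_def]
        rw [← mul_div_assoc, le_div_iff₀ (by positivity)]
        calc Real.exp (-(θ*y)) * (Real.exp (π*v/2*α) * P ^ ((3:ℝ)*α))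
            ≤ Real.exp (|θ| * y) * (Real.exp (π*v/2*α) * (Real.exp (c*P) * K)) := by
              have h1 : Real.exp (-(θ*y)) ≤ Real.exp (|θ| * y) := by
                apply Real.exp_le_exp.mpr
                have : -θ ≤ |θ| := neg_le_abs θ
                nlinarith [abs_nonneg θ]
              have h2 : Real.exp (π*v/2*α) * P ^ ((3:ℝ)*α) ≤
                  Real.exp (π*v/2*α) * (Real.exp (c*P) * K) :=
                mul_le_mul_of_nonneg_left hpoly (Real.exp_nonneg _)
              exact mul_le_mul h1 h2 (by positivity) (Real.exp_nonneg _)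
          _ = K * Real.exp (α*b + α + c*(b+3)) * Real.exp ((a*α+δ)*x) *
                Real.exp (-(α*u) * Real.log u) * Real.exp ((|θ| + a*α*π/2 + δ)*y) *
                Real.exp ((u*Real.log u - u - 1)*α) := by
              simp only [hK_def, ← Real.exp_add]
              congr 1
              rw [hP_def, hu_def, hv_def, hc_def]
              field_simp
              ring
    _ = M * Real.exp ((a*α+δ)*x) * ‖z‖ ^ x * u ^ (-(α*u)) *
          Real.exp ((|θ| + a*α*π/2 + δ)*y) * L ^ α := by ring
    _ ≤ M * Real.exp ((a*α+δ)*x) * ‖z‖ ^ x * u ^ (-(α*u)) *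
          Real.exp ((|θ| + a*α*π/2 + δ)*y) *
          ‖Complex.Gamma ((u:ℝ) + (v:ℝ)*Complex.I)‖ ^ α := by
        apply mul_le_mul_of_nonneg_left hGα
        positivity
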